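/- arXiv:1407.6756 — 2 statements merged into one kernel-verified Lean document; each statement's English description precedes it below -/
import Mathlib

section
/- For the hash family h_a(x) = (a·x mod u) div (u/m) where u and m are powers of two with m < u and a ∈ [u] odd, for any h in the family and any x, x' ∈ [u], h(x) + h(x') is congruent modulo m to either h(x+x') or h(x+x') − 1 (i.e., the family is almost linear). -/
/-- Almost linearity of the hash family `h_a(x) = ((a*x) mod u) div (u/m)`
with `u = 2^w`, `m = 2^s`, `s < w`, `a` odd:
`h(x) + h(x')` is congruent mod `m` to `h(x+x')` or `h(x+x') - 1`. -/
theorem stmt0 (w s : ℕ) (hsw : s < w) (a : ℕ) (ha : Odd a) (ha_lt : a < 2 ^ w)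
    (h : ℕ → ℕ) (hdef : ∀ x, h x = (a * x % 2 ^ w) / (2 ^ w / 2 ^ s))
    (x x' : ℕ) (hx : x < 2 ^ w) (hx' : x' < 2 ^ w) :
    (h x + h x') % 2 ^ s = h (x + x') % 2 ^ s ∨
    (h x + h x') % 2 ^ s = (h (x + x') + (2 ^ s - 1)) % 2 ^ s := by
  set d : ℕ := 2 ^ (w - s) with hd
  have hdpos : 0 < d := Nat.pow_pos (by norm_num)
  have hmpos : 0 < 2 ^ s := Nat.pow_pos (by norm_num)
  have hu : 2 ^ w = d * 2 ^ s := by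
    rw [hd, ← pow_add]
    congr 1
    omega
  have hdiv : 2 ^ w / 2 ^ s = d := by
    rw [hu, Nat.mul_div_cancel _ hmpos]
  set A := a * x % 2 ^ w with hA
  set B := a * x' % 2 ^ w with hB
  have hAB : a * (x + x') % 2 ^ w = (A + B) % 2 ^ w := by
    rw [hA, hB, Nat.mul_add, Nat.add_mod]
  rw [hdef, hdef, hdef, hdiv, hAB, ← hA, ← hB]
  set t := (A + B) % 2 ^ w / d with ht
  have key : t % 2 ^ s = (A + B) / d % 2 ^ s := by
    rw [ht, hu, Nat.mod_mul_right_div_self, Nat.mod_mod_of_dvd _ dvd_rfl]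
  rw [Nat.add_div hdpos] at key
  split at key
  · right
    calc (A / d + B / d) % 2 ^ s
        = (A / d + B / d + 2 ^ s) % 2 ^ s := (Nat.add_mod_right _ _).symm
      _ = (A / d + B / d + 1 + (2 ^ s - 1)) % 2 ^ s := by congr 1; omega
      _ = (t + (2 ^ s - 1)) % 2 ^ s := by
          rw [Nat.add_mod, ← key, ← Nat.add_mod]
  · left
    rw [key, Nat.add_zero]
end

section
/- Let G be the bipartite-like gadget graph: for each c ∈ C vertices c_A, c_B joined by an edge; for each a ∈ A vertices a', a'' joined by an edge, with a' joined to c_A for each c ∈ a; for each b ∈ B vertices b', b'' joined by an edge, with b' joined to c_B for each c ∈ b. Then the matching M consisting of all 'copy' edges {c_A,c_B}, {a',a''}, {b',b''} is a perfect matching of G, and it is the unique perfect matching of G. -/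
/-- Vertices of the gadget graph: `Sum.inl (c, false)` is `c_A`,
`Sum.inl (c, true)` is `c_B`, `Sum.inr (Sum.inl (a, false))` is `a'`,
`Sum.inr (Sum.inl (a, true))` is `a''`, and similarly for `b`. -/
abbrev GadgetV (α β γ : Type*) : Type _ := (γ × Bool) ⊕ ((α × Bool) ⊕ (β × Bool))

/-- Adjacency of the gadget graph: copy edges `{c_A, c_B}`, `{a', a''}`,
`{b', b''}`, together with edges `{a', c_A}` for `c ∈ a` and `{b', c_B}`
for `c ∈ b`. -/
def gadgetAdj {α β γ : Type*} (Sa : α → Set γ) (Sb : β → Set γ)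
    (u v : GadgetV α β γ) : Prop :=
  (∃ c, ({u, v} : Set (GadgetV α β γ)) =
      {Sum.inl (c, false), Sum.inl (c, true)}) ∨
  (∃ a, ({u, v} : Set (GadgetV α β γ)) =
      {Sum.inr (Sum.inl (a, false)), Sum.inr (Sum.inl (a, true))}) ∨
  (∃ b, ({u, v} : Set (GadgetV α β γ)) =
      {Sum.inr (Sum.inr (b, false)), Sum.inr (Sum.inr (b, true))}) ∨
  (∃ a c, c ∈ Sa a ∧ ({u, v} : Set (GadgetV α β γ)) =
      {Sum.inr (Sum.inl (a, false)), Sum.inl (c, false)}) ∨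
  (∃ b c, c ∈ Sb b ∧ ({u, v} : Set (GadgetV α β γ)) =
      {Sum.inr (Sum.inr (b, false)), Sum.inl (c, true)})

/-- The copy edges `{c_A, c_B}`, `{a', a''}`, `{b', b''}`. -/
def copyRel {α β γ : Type*} (u v : GadgetV α β γ) : Prop :=
  (∃ c, ({u, v} : Set (GadgetV α β γ)) =
      {Sum.inl (c, false), Sum.inl (c, true)}) ∨
  (∃ a, ({u, v} : Set (GadgetV α β γ)) =
      {Sum.inr (Sum.inl (a, false)), Sum.inr (Sum.inl (a, true))}) ∨
  (∃ b, ({u, v} : Set (GadgetV α β γ)) =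
      {Sum.inr (Sum.inr (b, false)), Sum.inr (Sum.inr (b, true))})

def gadgetPartner {α β γ : Type*} : GadgetV α β γ → GadgetV α β γ
  | Sum.inl (c, b) => Sum.inl (c, !b)
  | Sum.inr (Sum.inl (a, b)) => Sum.inr (Sum.inl (a, !b))
  | Sum.inr (Sum.inr (x, b)) => Sum.inr (Sum.inr (x, !b))

lemma copyRel_iff {α β γ : Type*} (u v : GadgetV α β γ) :
    copyRel u v ↔ v = gadgetPartner u := by
  constructor
  · rintro (⟨c, h⟩ | ⟨a, h⟩ | ⟨b, h⟩) <;>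
      rw [Set.pair_eq_pair_iff] at h <;>
      rcases h with ⟨rfl, rfl⟩ | ⟨rfl, rfl⟩ <;> rfl
  · rintro rfl
    rcases u with ⟨c, _ | _⟩ | ⟨a, _ | _⟩ | ⟨x, _ | _⟩
    · exact Or.inl ⟨c, rfl⟩
    · exact Or.inl ⟨c, Set.pair_comm _ _⟩
    · exact Or.inr (Or.inl ⟨a, rfl⟩)
    · exact Or.inr (Or.inl ⟨a, Set.pair_comm _ _⟩)
    · exact Or.inr (Or.inr ⟨x, rfl⟩)
    · exact Or.inr (Or.inr ⟨x, Set.pair_comm _ _⟩)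

lemma gadget_aux_a {α β γ : Type*} {Sa : α → Set γ} {Sb : β → Set γ} {a : α}
    {w : GadgetV α β γ} (h : gadgetAdj Sa Sb (Sum.inr (Sum.inl (a, true))) w) :
    w = Sum.inr (Sum.inl (a, false)) := by
  simp only [gadgetAdj, Set.pair_eq_pair_iff] at h
  aesop

lemma gadget_aux_b {α β γ : Type*} {Sa : α → Set γ} {Sb : β → Set γ} {b : β}
    {w : GadgetV α β γ} (h : gadgetAdj Sa Sb (Sum.inr (Sum.inr (b, true))) w) :
    w = Sum.inr (Sum.inr (b, false)) := by
  simp only [gadgetAdj, Set.pair_eq_pair_iff] at h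
  aesop

lemma gadget_aux_c {α β γ : Type*} {Sa : α → Set γ} {Sb : β → Set γ} {c : γ}
    {w : GadgetV α β γ} (h : gadgetAdj Sa Sb (Sum.inl (c, false)) w) :
    w = Sum.inl (c, true) ∨ ∃ a, w = Sum.inr (Sum.inl (a, false)) := by
  simp only [gadgetAdj, Set.pair_eq_pair_iff] at h
  aesop

/-- The matching consisting of all copy edges is a perfect matching of the
gadget graph, and it is its unique perfect matching. -/
theorem stmt13 {α β γ : Type*} (Sa : α → Set γ) (Sb : β → Set γ)
    (G : SimpleGraph (GadgetV α β γ))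
    (hG : ∀ u v, G.Adj u v ↔ gadgetAdj Sa Sb u v) :
    ∃ M : G.Subgraph, (∀ u v, M.Adj u v ↔ copyRel u v) ∧
      M.IsPerfectMatching ∧
      ∀ M' : G.Subgraph, M'.IsPerfectMatching → M' = M := by
  have hpp : ∀ u : GadgetV α β γ, gadgetPartner (gadgetPartner u) = u := by
    rintro (⟨c, _ | _⟩ | ⟨a, _ | _⟩ | ⟨x, _ | _⟩) <;> rfl
  refine ⟨⟨Set.univ, copyRel, ?_, fun _ => trivial, ?_⟩, fun u v => Iff.rfl, ⟨?_, fun _ => trivial⟩, ?_⟩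
  · intro u v h
    rw [hG]
    rcases h with h | h | h
    · exact Or.inl h
    · exact Or.inr (Or.inl h)
    · exact Or.inr (Or.inr (Or.inl h))
  · constructor; intro u v h
    rw [copyRel_iff] at h ⊢
    rw [h, hpp]
  · intro v _
    refine ⟨gadgetPartner v, (copyRel_iff _ _).2 rfl, fun w hw => (copyRel_iff _ _).1 hw⟩
  · intro M' hM'
    have hA2 : ∀ a, M'.Adj (Sum.inr (Sum.inl (a, true))) (Sum.inr (Sum.inl (a, false))) := by
      intro a
      obtain ⟨w, hw, -⟩ := hM'.1 (hM'.2 (Sum.inr (Sum.inl (a, true))))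
      have := gadget_aux_a ((hG _ _).1 (M'.adj_sub hw))
      rwa [this] at hw
    have hB2 : ∀ b, M'.Adj (Sum.inr (Sum.inr (b, true))) (Sum.inr (Sum.inr (b, false))) := by
      intro b
      obtain ⟨w, hw, -⟩ := hM'.1 (hM'.2 (Sum.inr (Sum.inr (b, true))))
      have := gadget_aux_b ((hG _ _).1 (M'.adj_sub hw))
      rwa [this] at hw
    have hC : ∀ c, M'.Adj (Sum.inl (c, false)) (Sum.inl (c, true)) := by
      intro c
      obtain ⟨w, hw, -⟩ := hM'.1 (hM'.2 (Sum.inl (c, false)))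
      rcases gadget_aux_c ((hG _ _).1 (M'.adj_sub hw)) with h | ⟨a, rfl⟩
      · rwa [h] at hw
      · exfalso
        have h1 : M'.Adj (Sum.inr (Sum.inl (a, false))) (Sum.inl (c, false)) := M'.adj_symm hw
        have h2 : M'.Adj (Sum.inr (Sum.inl (a, false))) (Sum.inr (Sum.inl (a, true))) :=
          M'.adj_symm (hA2 a)
        have := (hM'.1 (hM'.2 (Sum.inr (Sum.inl (a, false))))).unique h1 h2
        simp at this
    have key : ∀ u : GadgetV α β γ, M'.Adj u (gadgetPartner u) := by
      rintro (⟨c, _ | _⟩ | ⟨a, _ | _⟩ | ⟨x, _ | _⟩)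
      · exact hC c
      · exact M'.adj_symm (hC c)
      · exact M'.adj_symm (hA2 a)
      · exact hA2 a
      · exact M'.adj_symm (hB2 x)
      · exact hB2 x
    ext u v
    · simp [hM'.2 u]
    · show M'.Adj u v ↔ copyRel u v
      rw [copyRel_iff]
      constructor
      · intro h
        exact (hM'.1 (hM'.2 u)).unique h (key u)
      · rintro rfl
        exact key u
end
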